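/- Let (U_k)_{k ≥ 0} be independent random variables uniformly distributed on [0,1], and let N be an independent random variable with geometric distribution P(N = n) = (1/8)·(7/8)^n for n = 0, 1, 2, .... Define X_0 = U_0/4 and recursively X_k = G_{X_{k−1}}^{−1}(U_k) for k ≥ 1. Then the random variable X_N has law μ, the unique solution of the distributional fixed-point equation Y =_d U·Y + U·(1−U). -/

import Mathlib

open MeasureTheory ProbabilityTheory Set
open scoped ENNReal

/-- The distribution function `F_x` of `U·x + U·(1−U)` for `U` uniform on `[0,1]`. -/
noncomputable def F (x y : ℝ) : ℝ :=
  if y < x then (1 + x - Real.sqrt ((1 + x) ^ 2 - 4 * y)) / 2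
  else if y < ((1 + x) / 2) ^ 2 then 1 - Real.sqrt ((1 + x) ^ 2 - 4 * y)
  else 1

/-- `G_x(y) = (8/7)·(F_x(y) − (1/2)·min(y, 1/4))`. -/
noncomputable def G (x y : ℝ) : ℝ := 8 / 7 * (F x y - (1 / 2) * min y (1 / 4))

/-- The quantile function (generalized inverse) `G_x^{−1} : [0,1] → [0,1]` of the
distribution with CDF `G_x`. -/
noncomputable def Ginv (x z : ℝ) : ℝ := sInf {y ∈ Set.Icc (0:ℝ) 1 | z ≤ G x y}


lemma F_low {x y : ℝ} (hx1 : x ≤ 1) (h0 : 0 ≤ y) (hyx : y ≤ x) :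
    F x y = (1 + x - Real.sqrt ((1 + x) ^ 2 - 4 * y)) / 2 := by
  unfold F
  rcases lt_or_eq_of_le hyx with h | h
  · rw [if_pos h]
  · subst h
    rw [if_neg (lt_irrefl _)]
    have hs : Real.sqrt ((1 + y) ^ 2 - 4 * y) = 1 - y := by
      rw [show (1 + y) ^ 2 - 4 * y = (1 - y) ^ 2 by ring, Real.sqrt_sq (by linarith)]
    rcases lt_or_ge y (((1 + y) / 2) ^ 2) with h2 | h2
    · rw [if_pos h2, hs]; ring
    · have : ((1 - y)/2)^2 ≤ 0 := by nlinarith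
      have hy1 : y = 1 := by nlinarith [sq_nonneg ((1-y)/2)]
      subst hy1
      rw [if_neg (not_lt.mpr h2), hs]; norm_num

lemma F_mid {x y : ℝ} (hxy : x ≤ y) (hyb : y ≤ ((1 + x) / 2) ^ 2) :
    F x y = 1 - Real.sqrt ((1 + x) ^ 2 - 4 * y) := by
  unfold F
  have hxb : x ≤ ((1 + x) / 2) ^ 2 := by nlinarith [sq_nonneg (1 - x)]
  rw [if_neg (not_lt.mpr hxy)]
  rcases lt_or_eq_of_le hyb with h | h
  · rw [if_pos h]
  · subst h
    rw [if_neg (lt_irrefl _)]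
    rw [show (1 + x) ^ 2 - 4 * ((1 + x) / 2) ^ 2 = 0 by ring, Real.sqrt_zero]
    norm_num

lemma F_high {x y : ℝ} (h : ((1 + x) / 2) ^ 2 ≤ y) : F x y = 1 := by
  unfold F
  have hxb : x ≤ ((1 + x) / 2) ^ 2 := by nlinarith [sq_nonneg (1 - x)]
  rw [if_neg (not_lt.mpr (le_trans hxb h)), if_neg (not_lt.mpr h)]

lemma continuous_G {x : ℝ} (hx0 : 0 ≤ x) (hx1 : x ≤ 1) : Continuous (G x) := by
  have h1 : Continuous fun y : ℝ => (1 + x - Real.sqrt ((1 + x) ^ 2 - 4 * y)) / 2 := by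
    fun_prop
  have h2 : Continuous fun y : ℝ => 1 - Real.sqrt ((1 + x) ^ 2 - 4 * y) := by fun_prop
  have hinner : Continuous fun y : ℝ =>
      if ((1 + x) / 2) ^ 2 ≤ y then (1:ℝ) else 1 - Real.sqrt ((1 + x) ^ 2 - 4 * y) := by
    apply Continuous.if_le continuous_const h2 continuous_const continuous_id
    intro y hy
    simp only [id_eq] at hy
    rw [← hy, show (1 + x) ^ 2 - 4 * ((1 + x) / 2) ^ 2 = 0 by ring, Real.sqrt_zero]
    norm_num
  have hF : Continuous (F x) := by
    have : F x = fun y => if x ≤ y then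
        (if ((1 + x) / 2) ^ 2 ≤ y then (1:ℝ) else 1 - Real.sqrt ((1 + x) ^ 2 - 4 * y))
        else (1 + x - Real.sqrt ((1 + x) ^ 2 - 4 * y)) / 2 := by
      funext y
      unfold F
      rcases lt_or_ge y x with h | h
      · rw [if_pos h, if_neg (not_le.mpr h)]
      · rw [if_neg (not_lt.mpr h), if_pos h]
        rcases lt_or_ge y (((1 + x) / 2) ^ 2) with h2 | h2
        · rw [if_pos h2, if_neg (not_le.mpr h2)]
        · rw [if_neg (not_lt.mpr h2), if_pos h2]
    rw [this]
    apply Continuous.if_le hinner h1 continuous_const continuous_id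
    intro y hy
    simp only [id_eq] at hy
    subst hy
    rcases lt_or_ge x (((1 + x) / 2) ^ 2) with h2 | h2
    · rw [if_neg (not_le.mpr h2), show (1 + x) ^ 2 - 4 * x = (1 - x) ^ 2 by ring,
        Real.sqrt_sq (by linarith)]
      ring
    · have hx : x = 1 := by nlinarith [sq_nonneg (1 - x)]
      subst hx
      rw [if_pos h2, show (1 + 1 : ℝ) ^ 2 - 4 * 1 = 0 by ring, Real.sqrt_zero]
      norm_num
  unfold G
  fun_prop

lemma sqrt_sub_ge {D1 D2 : ℝ} (h2 : 0 ≤ D2) (h21 : D2 ≤ D1) (h14 : D1 ≤ 4) :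
    (D1 - D2) / 4 ≤ Real.sqrt D1 - Real.sqrt D2 := by
  have s1 := Real.sq_sqrt (le_trans h2 h21)
  have s2 := Real.sq_sqrt h2
  have n1 := Real.sqrt_nonneg D1
  have n2 := Real.sqrt_nonneg D2
  have le1 : Real.sqrt D1 ≤ 2 := by
    rw [show (2:ℝ) = Real.sqrt 4 by rw [show (4:ℝ) = 2^2 by norm_num, Real.sqrt_sq]; norm_num]
    exact Real.sqrt_le_sqrt h14
  have le2 : Real.sqrt D2 ≤ Real.sqrt D1 := Real.sqrt_le_sqrt h21
  nlinarith [mul_nonneg (sub_nonneg.mpr le2) (sub_nonneg.mpr (le_trans le2 le1))]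

lemma G_mono {x : ℝ} (hx0 : 0 ≤ x) (hx1 : x ≤ 1) :
    MonotoneOn (G x) (Icc (0:ℝ) 1) := by
  have hb1 : ((1 + x) / 2) ^ 2 ≤ 1 := by nlinarith
  have hxb : x ≤ ((1 + x) / 2) ^ 2 := by nlinarith [sq_nonneg (1 - x)]
  have hb0 : (1:ℝ)/4 ≤ ((1 + x) / 2) ^ 2 := by nlinarith
  -- helper: min bound
  have hmin : ∀ y₁ y₂ : ℝ, y₁ ≤ y₂ → min y₂ (1/4) - min y₁ (1/4) ≤ y₂ - y₁ ∧
      0 ≤ min y₂ (1/4) - min y₁ (1/4) := by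
    intro y₁ y₂ h
    constructor
    · rcases le_total y₂ (1/4) with h2 | h2
      · rw [min_eq_left h2, min_eq_left (le_trans h h2)]
      · rw [min_eq_right h2]
        rcases le_total y₁ (1/4) with h1 | h1
        · rw [min_eq_left h1]; linarith
        · rw [min_eq_right h1]; linarith
    · exact sub_nonneg.mpr (min_le_min h le_rfl)
  -- monotone on [0,x]
  have m1 : ∀ y₁ y₂, 0 ≤ y₁ → y₁ ≤ y₂ → y₂ ≤ x → G x y₁ ≤ G x y₂ := by
    intro y₁ y₂ h0 h12 h2x
    unfold G
    rw [F_low hx1 h0 (le_trans h12 h2x), F_low hx1 (le_trans h0 h12) h2x]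
    have hD2 : (0:ℝ) ≤ (1 + x)^2 - 4*y₂ := by nlinarith [sq_nonneg (1 - x)]
    have hD1 : (1 + x)^2 - 4*y₁ ≤ 4 := by nlinarith
    have key := sqrt_sub_ge hD2 (by linarith : (1 + x)^2 - 4*y₂ ≤ (1 + x)^2 - 4*y₁) hD1
    have hm := hmin y₁ y₂ h12
    nlinarith [key, hm.1]
  -- monotone on [x, b]
  have m2 : ∀ y₁ y₂, x ≤ y₁ → y₁ ≤ y₂ → y₂ ≤ ((1 + x) / 2) ^ 2 → G x y₁ ≤ G x y₂ := by
    intro y₁ y₂ h0 h12 h2b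
    unfold G
    rw [F_mid h0 (le_trans h12 h2b), F_mid (le_trans h0 h12) h2b]
    have hD2 : (0:ℝ) ≤ (1 + x)^2 - 4*y₂ := by nlinarith
    have hD1 : (1 + x)^2 - 4*y₁ ≤ 4 := by nlinarith
    have key := sqrt_sub_ge hD2 (by linarith : (1 + x)^2 - 4*y₂ ≤ (1 + x)^2 - 4*y₁) hD1
    have hm := hmin y₁ y₂ h12
    nlinarith [key, hm.1]
  -- monotone on [b, 1]
  have m3 : ∀ y₁ y₂, ((1 + x) / 2) ^ 2 ≤ y₁ → y₁ ≤ y₂ → G x y₁ ≤ G x y₂ := by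
    intro y₁ y₂ h0 h12
    unfold G
    rw [F_high h0, F_high (le_trans h0 h12),
      min_eq_right (le_trans hb0 h0), min_eq_right (le_trans hb0 (le_trans h0 h12))]
  intro y₁ hy₁ y₂ hy₂ h12
  obtain ⟨h10, h11⟩ := hy₁
  obtain ⟨h20, h21⟩ := hy₂
  rcases le_total y₂ x with hc | hc
  · exact m1 y₁ y₂ h10 h12 hc
  rcases le_total y₁ x with hd | hd
  · -- y₁ ≤ x ≤ y₂
    have t1 : G x y₁ ≤ G x x := m1 y₁ x h10 hd le_rfl
    rcases le_total y₂ (((1 + x) / 2) ^ 2) with he | he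
    · exact le_trans t1 (m2 x y₂ le_rfl hc he)
    · exact le_trans t1 (le_trans (m2 x _ le_rfl hxb le_rfl) (m3 _ y₂ le_rfl he))
  · rcases le_total y₂ (((1 + x) / 2) ^ 2) with he | he
    · exact m2 y₁ y₂ hd h12 he
    · rcases le_total y₁ (((1 + x) / 2) ^ 2) with hf | hf
      · exact le_trans (m2 y₁ _ hd hf le_rfl) (m3 _ y₂ le_rfl he)
      · exact m3 y₁ y₂ hf h12

lemma G_zero {x : ℝ} (hx0 : 0 ≤ x) (hx1 : x ≤ 1) : G x 0 = 0 := by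
  unfold G
  rw [F_low hx1 le_rfl hx0, show (1+x)^2 - 4*0 = (1+x)^2 by ring,
    Real.sqrt_sq (by linarith), min_eq_left (by norm_num : (0:ℝ) ≤ 1/4)]
  ring

lemma G_one {x : ℝ} (hx0 : 0 ≤ x) (hx1 : x ≤ 1) : G x 1 = 1 := by
  unfold G
  rw [F_high (by nlinarith), min_eq_right (by norm_num : (1:ℝ)/4 ≤ 1)]
  norm_num

lemma G_mem {x y : ℝ} (hx0 : 0 ≤ x) (hx1 : x ≤ 1) (hy0 : 0 ≤ y) (hy1 : y ≤ 1) :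
    G x y ∈ Icc (0:ℝ) 1 := by
  constructor
  · rw [← G_zero hx0 hx1]
    exact G_mono hx0 hx1 (by simp) (by constructor <;> linarith) hy0
  · rw [← G_one hx0 hx1]
    exact G_mono hx0 hx1 (by constructor <;> linarith) (by simp) hy1


lemma Ginv_mem (x z : ℝ) : Ginv x z ∈ Icc (0:ℝ) 1 := by
  unfold Ginv
  set S := {y ∈ Set.Icc (0:ℝ) 1 | z ≤ G x y} with hS
  rcases eq_empty_or_nonempty S with h | h
  · rw [h, Real.sInf_empty]; simp
  · have hbdd : BddBelow S := ⟨0, fun y hy => hy.1.1⟩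
    constructor
    · exact le_csInf h (fun y hy => hy.1.1)
    · obtain ⟨s, hs⟩ := h
      exact le_trans (csInf_le hbdd hs) hs.1.2

lemma Ginv_mem_S {x z : ℝ} (hx0 : 0 ≤ x) (hx1 : x ≤ 1) (hz0 : 0 < z) (hz1 : z ≤ 1) :
    Ginv x z ∈ {y ∈ Set.Icc (0:ℝ) 1 | z ≤ G x y} := by
  have hclosed : IsClosed {y ∈ Set.Icc (0:ℝ) 1 | z ≤ G x y} := by
    have : {y ∈ Set.Icc (0:ℝ) 1 | z ≤ G x y} = Icc (0:ℝ) 1 ∩ (G x) ⁻¹' (Ici z) := by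
      ext y; simp only [mem_setOf_eq, mem_inter_iff, mem_preimage, mem_Ici]
    rw [this]
    exact isClosed_Icc.inter (isClosed_Ici.preimage (continuous_G hx0 hx1))
  have hne : {y ∈ Set.Icc (0:ℝ) 1 | z ≤ G x y}.Nonempty :=
    ⟨1, by simp [G_one hx0 hx1, hz1]⟩
  have hbdd : BddBelow {y ∈ Set.Icc (0:ℝ) 1 | z ≤ G x y} := ⟨0, fun y hy => hy.1.1⟩
  exact hclosed.csInf_mem hne hbdd

lemma Ginv_galois {x z y : ℝ} (hx0 : 0 ≤ x) (hx1 : x ≤ 1) (hz0 : 0 < z) (hz1 : z ≤ 1)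
    (hy : y ∈ Icc (0:ℝ) 1) : Ginv x z ≤ y ↔ z ≤ G x y := by
  constructor
  · intro h
    have hm := Ginv_mem_S hx0 hx1 hz0 hz1
    exact le_trans hm.2 (G_mono hx0 hx1 hm.1 hy h)
  · intro h
    exact csInf_le ⟨0, fun w hw => hw.1.1⟩ ⟨hy, h⟩

lemma Ginv_of_nonpos {x z : ℝ} (hx0 : 0 ≤ x) (hx1 : x ≤ 1) (hz : z ≤ 0) : Ginv x z = 0 := by
  apply le_antisymm
  · exact csInf_le ⟨0, fun w hw => hw.1.1⟩ ⟨by simp, by rw [G_zero hx0 hx1]; exact hz⟩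
  · exact (Ginv_mem x z).1

lemma Ginv_of_gt_one {x z : ℝ} (hx0 : 0 ≤ x) (hx1 : x ≤ 1) (hz : 1 < z) : Ginv x z = 0 := by
  have : {y ∈ Set.Icc (0:ℝ) 1 | z ≤ G x y} = ∅ := by
    ext y
    simp only [mem_setOf_eq, mem_empty_iff_false, iff_false, not_and, mem_Icc]
    intro hy h
    have := (G_mem hx0 hx1 hy.1 hy.2).2
    linarith
  unfold Ginv
  rw [this, Real.sInf_empty]

lemma Ginv_le_iff {x z y : ℝ} (hx0 : 0 ≤ x) (hx1 : x ≤ 1) (hy : y ∈ Icc (0:ℝ) 1) :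
    Ginv x z ≤ y ↔ (z ≤ G x y ∨ z ≤ 0 ∨ 1 < z) := by
  rcases le_or_gt z 0 with h | h
  · simp [Ginv_of_nonpos hx0 hx1 h, hy.1, h]
  rcases le_or_gt z 1 with h1 | h1
  · rw [Ginv_galois hx0 hx1 h h1 hy]
    constructor
    · exact Or.inl
    · rintro (hh | hh | hh)
      · exact hh
      · linarith
      · linarith
  · simp [Ginv_of_gt_one hx0 hx1 h1, hy.1, h1]

noncomputable def clamp (x : ℝ) : ℝ := max 0 (min 1 x)

lemma clamp_mem (x : ℝ) : clamp x ∈ Icc (0:ℝ) 1 :=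
  ⟨le_max_left _ _, max_le (by norm_num) (min_le_left _ _)⟩

lemma clamp_eq {x : ℝ} (h : x ∈ Icc (0:ℝ) 1) : clamp x = x := by
  unfold clamp
  rw [min_eq_right h.2, max_eq_right h.1]

lemma measurable_G_x (y : ℝ) : Measurable (fun x => G x y) := by
  unfold G F
  apply Measurable.const_mul
  apply Measurable.sub _ measurable_const
  apply Measurable.ite
  · exact measurableSet_lt measurable_const measurable_id
  · fun_prop
  · apply Measurable.ite
    · exact measurableSet_lt measurable_const (by fun_prop)
    · fun_prop
    · fun_prop

lemma measurable_clamp : Measurable clamp := by unfold clamp; fun_prop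

lemma measurable_Ginv : Measurable (fun p : ℝ × ℝ => Ginv (clamp p.1) p.2) := by
  apply measurable_of_Iic
  intro y
  rcases lt_or_ge y 0 with hy | hy
  · have : (fun p : ℝ × ℝ => Ginv (clamp p.1) p.2) ⁻¹' Iic y = ∅ := by
      ext p
      simp only [mem_preimage, mem_Iic, mem_empty_iff_false, iff_false, not_le]
      exact lt_of_lt_of_le hy (Ginv_mem _ _).1
    rw [this]; exact MeasurableSet.empty
  rcases le_or_gt 1 y with hy1 | hy1
  · have : (fun p : ℝ × ℝ => Ginv (clamp p.1) p.2) ⁻¹' Iic y = univ := by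
      ext p
      simp only [mem_preimage, mem_Iic, mem_univ, iff_true]
      exact le_trans (Ginv_mem _ _).2 hy1
    rw [this]; exact MeasurableSet.univ
  · have : (fun p : ℝ × ℝ => Ginv (clamp p.1) p.2) ⁻¹' Iic y =
        {p : ℝ × ℝ | p.2 ≤ G (clamp p.1) y} ∪ {p : ℝ × ℝ | p.2 ≤ 0} ∪ {p : ℝ × ℝ | 1 < p.2} := by
      ext p
      have hc := clamp_mem p.1
      simp only [mem_preimage, mem_Iic, mem_union, mem_setOf_eq]
      rw [Ginv_le_iff hc.1 hc.2 ⟨hy, le_of_lt hy1⟩]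
      tauto
    rw [this]
    apply MeasurableSet.union
    apply MeasurableSet.union
    · exact measurableSet_le measurable_snd ((measurable_G_x y).comp (measurable_clamp.comp measurable_fst))
    · exact measurableSet_le measurable_snd measurable_const
    · exact measurableSet_lt measurable_const measurable_snd

noncomputable def unif : Measure ℝ := volume.restrict (Set.Icc 0 1)

instance : IsProbabilityMeasure unif := by
  constructor
  unfold unif
  rw [Measure.restrict_apply_univ, Real.volume_Icc]
  norm_num

lemma unif_Iic (y : ℝ) : unif (Iic y) = ENNReal.ofReal (min y 1) := by
  unfold unif
  rw [Measure.restrict_apply measurableSet_Iic,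
    show Iic y ∩ Icc 0 1 = Icc 0 (min y 1) by
      ext u; simp only [mem_inter_iff, mem_Iic, mem_Icc, le_min_iff]; tauto,
    Real.volume_Icc, sub_zero]

lemma measurable_f (x : ℝ) : Measurable (fun u : ℝ => u * x + u * (1 - u)) := by fun_prop

lemma map_f_Iic {x : ℝ} (hx0 : 0 ≤ x) (hx1 : x ≤ 1) {y : ℝ} (hy : 0 ≤ y) :
    (unif.map (fun u : ℝ => u * x + u * (1 - u))) (Iic y) = ENNReal.ofReal (F x y) := by
  rw [Measure.map_apply (measurable_f x) measurableSet_Iic]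
  unfold unif
  rw [Measure.restrict_apply ((measurable_f x) measurableSet_Iic)]
  rcases lt_or_ge y x with hyx | hyx
  · -- 0 ≤ y < x : set is Icc 0 r₁
    set s := Real.sqrt ((1 + x) ^ 2 - 4 * y) with hs
    have hD0 : (0:ℝ) ≤ (1 + x) ^ 2 - 4 * y := by nlinarith [sq_nonneg (1 - x)]
    have hs2 : s ^ 2 = (1 + x) ^ 2 - 4 * y := Real.sq_sqrt hD0
    have hsnn : 0 ≤ s := Real.sqrt_nonneg _
    have hsle : s ≤ 1 + x := by nlinarith
    have hsgt : 1 - x < s := by nlinarith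
    have hset : (fun u : ℝ => u * x + u * (1 - u)) ⁻¹' Iic y ∩ Icc 0 1
        = Icc 0 ((1 + x - s) / 2) := by
      ext u
      simp only [mem_inter_iff, mem_preimage, mem_Iic, mem_Icc]
      constructor
      · rintro ⟨hf, h0, h1⟩
        refine ⟨h0, ?_⟩
        nlinarith [hf, h1, hsgt]
      · rintro ⟨h0, hr⟩
        have h1 : u ≤ 1 := by nlinarith
        refine ⟨?_, h0, h1⟩
        nlinarith
    rw [hset, Real.volume_Icc, sub_zero, F_low hx1 hy (le_of_lt hyx)]
  rcases lt_or_ge y (((1 + x) / 2) ^ 2) with hyb | hyb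
  · -- x ≤ y < b : set is Icc 0 r₁ ∪ Icc r₂ 1
    set s := Real.sqrt ((1 + x) ^ 2 - 4 * y) with hs
    have hD0 : (0:ℝ) < (1 + x) ^ 2 - 4 * y := by nlinarith
    have hs2 : s ^ 2 = (1 + x) ^ 2 - 4 * y := Real.sq_sqrt (le_of_lt hD0)
    have hsnn : 0 < s := Real.sqrt_pos.mpr hD0
    have hsle : s ≤ 1 - x := by nlinarith
    have hset : (fun u : ℝ => u * x + u * (1 - u)) ⁻¹' Iic y ∩ Icc 0 1
        = Icc 0 ((1 + x - s) / 2) ∪ Icc ((1 + x + s) / 2) 1 := by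
      ext u
      simp only [mem_inter_iff, mem_preimage, mem_Iic, mem_Icc, mem_union]
      constructor
      · rintro ⟨hf, h0, h1⟩
        rcases le_or_gt u ((1 + x - s) / 2) with h | h
        · exact Or.inl ⟨h0, h⟩
        · refine Or.inr ⟨?_, h1⟩
          nlinarith
      · rintro (⟨h0, hr⟩ | ⟨hr, h1⟩)
        · refine ⟨?_, h0, by nlinarith⟩
          nlinarith
        · refine ⟨?_, by nlinarith, h1⟩
          nlinarith
    rw [hset, measure_union ?hd measurableSet_Icc, Real.volume_Icc, Real.volume_Icc,
      sub_zero, F_mid hyx (le_of_lt hyb), ← ENNReal.ofReal_add (by nlinarith) (by nlinarith)]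
    · congr 1
      ring
    · rw [Set.disjoint_left]
      rintro u ⟨h0, hr⟩ ⟨hr2, h1⟩
      nlinarith
  · -- b ≤ y : whole interval
    have hset : (fun u : ℝ => u * x + u * (1 - u)) ⁻¹' Iic y ∩ Icc 0 1 = Icc 0 1 := by
      apply inter_eq_right.mpr
      intro u hu
      simp only [mem_preimage, mem_Iic]
      nlinarith [sq_nonneg (u - (1 + x) / 2), hu.1, hu.2]
    rw [hset, Real.volume_Icc, F_high hyb]
    norm_num

lemma map_f_Iic_neg {x : ℝ} (hx0 : 0 ≤ x) {y : ℝ} (hy : y < 0) :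
    (unif.map (fun u : ℝ => u * x + u * (1 - u))) (Iic y) = 0 := by
  rw [Measure.map_apply (measurable_f x) measurableSet_Iic]
  unfold unif
  rw [Measure.restrict_apply ((measurable_f x) measurableSet_Iic)]
  have hset : (fun u : ℝ => u * x + u * (1 - u)) ⁻¹' Iic y ∩ Icc 0 1 = ∅ := by
    ext u
    simp only [mem_inter_iff, mem_preimage, mem_Iic, mem_Icc, mem_empty_iff_false, iff_false]
    rintro ⟨hf, h0, h1⟩
    nlinarith
  rw [hset]
  exact measure_empty

lemma measurable_Ginv_x {x : ℝ} (hx0 : 0 ≤ x) (hx1 : x ≤ 1) : Measurable (Ginv x) := by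
  have h : (Ginv x) = (fun p : ℝ × ℝ => Ginv (clamp p.1) p.2) ∘ (fun u => (x, u)) := by
    funext u
    simp [clamp_eq ⟨hx0, hx1⟩]
  rw [h]
  exact measurable_Ginv.comp (by fun_prop)

lemma map_Ginv_Iic {x : ℝ} (hx0 : 0 ≤ x) (hx1 : x ≤ 1) {y : ℝ} (hy0 : 0 ≤ y) (hy1 : y ≤ 1) :
    (unif.map (Ginv x)) (Iic y) = ENNReal.ofReal (G x y) := by
  rw [Measure.map_apply (measurable_Ginv_x hx0 hx1) measurableSet_Iic]
  unfold unif
  rw [Measure.restrict_apply ((measurable_Ginv_x hx0 hx1) measurableSet_Iic)]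
  have hG := G_mem hx0 hx1 hy0 hy1
  have hset : (Ginv x) ⁻¹' Iic y ∩ Icc 0 1 = Icc 0 (G x y) := by
    ext u
    simp only [mem_inter_iff, mem_preimage, mem_Iic, mem_Icc]
    rw [Ginv_le_iff hx0 hx1 ⟨hy0, hy1⟩]
    constructor
    · rintro ⟨(h | h | h), h0, h1⟩
      · exact ⟨h0, h⟩
      · exact ⟨h0, le_trans h hG.1⟩
      · linarith
    · rintro ⟨h0, h1⟩
      exact ⟨Or.inl h1, h0, le_trans h1 hG.2⟩
  rw [hset, Real.volume_Icc, sub_zero]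

lemma map_Ginv_Iic_neg {x : ℝ} (hx0 : 0 ≤ x) (hx1 : x ≤ 1) {y : ℝ} (hy : y < 0) :
    (unif.map (Ginv x)) (Iic y) = 0 := by
  rw [Measure.map_apply (measurable_Ginv_x hx0 hx1) measurableSet_Iic]
  unfold unif
  rw [Measure.restrict_apply ((measurable_Ginv_x hx0 hx1) measurableSet_Iic)]
  have hset : (Ginv x) ⁻¹' Iic y ∩ Icc 0 1 = ∅ := by
    ext u
    simp only [mem_inter_iff, mem_preimage, mem_Iic, mem_Icc, mem_empty_iff_false, iff_false]
    rintro ⟨hf, h0, h1⟩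
    have := (Ginv_mem x u).1
    linarith
  rw [hset]
  exact measure_empty

lemma map_Ginv_Iic_big {x : ℝ} (hx0 : 0 ≤ x) (hx1 : x ≤ 1) {y : ℝ} (hy : 1 ≤ y) :
    (unif.map (Ginv x)) (Iic y) = 1 := by
  rw [Measure.map_apply (measurable_Ginv_x hx0 hx1) measurableSet_Iic]
  unfold unif
  rw [Measure.restrict_apply ((measurable_Ginv_x hx0 hx1) measurableSet_Iic)]
  have hset : (Ginv x) ⁻¹' Iic y ∩ Icc 0 1 = Icc 0 1 := by
    apply inter_eq_right.mpr
    intro u hu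
    simp only [mem_preimage, mem_Iic]
    exact le_trans (Ginv_mem x u).2 hy
  rw [hset, Real.volume_Icc]
  norm_num

noncomputable def rho : Measure ℝ := unif.map (fun u => u / 4)

lemma rho_Iic (y : ℝ) : rho (Iic y) = ENNReal.ofReal (min (4 * y) 1) := by
  unfold rho
  rw [Measure.map_apply (by fun_prop) measurableSet_Iic,
    show (fun u : ℝ => u / 4) ⁻¹' Iic y = Iic (4 * y) by
      ext u; simp only [mem_preimage, mem_Iic]; constructor <;> intro <;> linarith,
    unif_Iic]

instance : IsProbabilityMeasure rho := by
  unfold rho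
  exact Measure.isProbabilityMeasure_map (by fun_prop)

lemma step_eq {x : ℝ} (hx0 : 0 ≤ x) (hx1 : x ≤ 1) :
    unif.map (fun u : ℝ => u * x + u * (1 - u)) =
      (ENNReal.ofReal (1/8)) • rho + (ENNReal.ofReal (7/8)) • unif.map (Ginv x) := by
  haveI : IsProbabilityMeasure (unif.map (fun u : ℝ => u * x + u * (1 - u))) :=
    Measure.isProbabilityMeasure_map (measurable_f x).aemeasurable
  apply Measure.ext_of_Iic
  intro y
  rw [Measure.add_apply, Measure.smul_apply, Measure.smul_apply, rho_Iic, smul_eq_mul,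
    smul_eq_mul]
  rcases lt_or_ge y 0 with hy | hy
  · rw [map_f_Iic_neg hx0 hy, map_Ginv_Iic_neg hx0 hx1 hy,
      min_eq_left (by linarith : 4 * y ≤ 1),
      ENNReal.ofReal_of_nonpos (by linarith : 4 * y ≤ 0)]
    simp
  rcases le_or_gt y 1 with hy1 | hy1
  · rw [map_f_Iic hx0 hx1 hy, map_Ginv_Iic hx0 hx1 hy hy1,
      ← ENNReal.ofReal_mul (by norm_num : (0:ℝ) ≤ 1/8),
      ← ENNReal.ofReal_mul (by norm_num : (0:ℝ) ≤ 7/8),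
      ← ENNReal.ofReal_add
        (mul_nonneg (by norm_num) (le_min (by linarith) (by norm_num)))
        (mul_nonneg (by norm_num) (G_mem hx0 hx1 hy hy1).1)]
    congr 1
    have hmin : min (4 * y) 1 = 4 * min y (1/4) := by
      rcases le_total y (1/4) with h | h
      · rw [min_eq_left (by linarith), min_eq_left h]
      · rw [min_eq_right (by linarith), min_eq_right h]
        norm_num
    unfold G
    rw [hmin]
    ring
  · rw [map_f_Iic hx0 hx1 hy, F_high (by nlinarith), map_Ginv_Iic_big hx0 hx1 (le_of_lt hy1),
      min_eq_right (by linarith)]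
    rw [ENNReal.ofReal_one, mul_one, mul_one,
      ← ENNReal.ofReal_add (by norm_num : (0:ℝ) ≤ 1/8) (by norm_num : (0:ℝ) ≤ 7/8)]
    norm_num

noncomputable def Tk (ν : Measure ℝ) : Measure ℝ :=
  (ν.prod unif).map (fun p : ℝ × ℝ => Ginv (clamp p.1) p.2)

lemma Tk_apply (ν : Measure ℝ) [SFinite ν] {s : Set ℝ} (hs : MeasurableSet s) :
    Tk ν s = ∫⁻ x, unif ((fun u => Ginv (clamp x) u) ⁻¹' s) ∂ν := by
  unfold Tk
  rw [Measure.map_apply measurable_Ginv hs, Measure.prod_apply (measurable_Ginv hs)]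
  rfl

lemma Tk_lin (ν ν' : Measure ℝ) [SFinite ν] [SFinite ν'] (a b : ℝ≥0∞) :
    Tk (a • ν + b • ν') = a • Tk ν + b • Tk ν' := by
  apply Measure.ext
  intro s hs
  rw [Measure.add_apply, Measure.smul_apply, Measure.smul_apply,
    Tk_apply _ hs, Tk_apply _ hs, Tk_apply _ hs, lintegral_add_measure,
    lintegral_smul_measure, lintegral_smul_measure, smul_eq_mul, smul_eq_mul]

instance Tk_prob (ν : Measure ℝ) [IsProbabilityMeasure ν] : IsProbabilityMeasure (Tk ν) := by
  unfold Tk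
  exact Measure.isProbabilityMeasure_map measurable_Ginv.aemeasurable

lemma Tk_supp (ν : Measure ℝ) [IsProbabilityMeasure ν] : Tk ν (Icc 0 1) = 1 := by
  rw [Tk_apply _ measurableSet_Icc]
  have : ∀ x : ℝ, (fun u => Ginv (clamp x) u) ⁻¹' (Icc 0 1) = univ := by
    intro x
    ext u
    simp only [mem_preimage, mem_univ, iff_true]
    exact Ginv_mem _ _
  simp only [this]
  simp [measure_univ]

lemma rho_supp : rho (Icc 0 1) = 1 := by
  unfold rho
  rw [Measure.map_apply (by fun_prop) measurableSet_Icc]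
  apply le_antisymm (prob_le_one)
  have hsub : Icc (0:ℝ) 1 ⊆ (fun u : ℝ => u / 4) ⁻¹' (Icc 0 1) := by
    intro u hu
    simp only [mem_preimage, mem_Icc]
    constructor <;> [linarith [hu.1]; linarith [hu.2]]
  calc (1:ℝ≥0∞) = unif (Icc 0 1) := by
        unfold unif
        rw [Measure.restrict_apply measurableSet_Icc, inter_self, Real.volume_Icc]
        norm_num
    _ ≤ _ := measure_mono hsub

lemma Kdecomp (ν : Measure ℝ) [IsProbabilityMeasure ν] (hsupp : ν (Icc 0 1) = 1) :
    (ν.prod unif).map (fun p : ℝ × ℝ => p.2 * p.1 + p.2 * (1 - p.2)) =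
      (ENNReal.ofReal (1/8)) • rho + (ENNReal.ofReal (7/8)) • Tk ν := by
  have hmf : Measurable (fun p : ℝ × ℝ => p.2 * p.1 + p.2 * (1 - p.2)) := by fun_prop
  have hae : ∀ᵐ x ∂ν, x ∈ Icc (0:ℝ) 1 := by
    rw [ae_iff]
    have : {x : ℝ | ¬x ∈ Icc (0:ℝ) 1} = (Icc (0:ℝ) 1)ᶜ := rfl
    rw [this, measure_compl measurableSet_Icc (measure_ne_top _ _), hsupp, measure_univ]
    simp
  apply Measure.ext
  intro s hs
  rw [Measure.map_apply hmf hs, Measure.prod_apply (hmf hs)]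
  have hptwise : ∀ᵐ x ∂ν,
      unif (Prod.mk x ⁻¹' ((fun p : ℝ × ℝ => p.2 * p.1 + p.2 * (1 - p.2)) ⁻¹' s)) =
        ENNReal.ofReal (1/8) * rho s +
          ENNReal.ofReal (7/8) * unif (Prod.mk x ⁻¹' ((fun p : ℝ × ℝ => Ginv (clamp p.1) p.2) ⁻¹' s)) := by
    filter_upwards [hae] with x hx
    have h1 : Prod.mk x ⁻¹' ((fun p : ℝ × ℝ => p.2 * p.1 + p.2 * (1 - p.2)) ⁻¹' s)
        = (fun u : ℝ => u * x + u * (1 - u)) ⁻¹' s := rfl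
    have h2 : Prod.mk x ⁻¹' ((fun p : ℝ × ℝ => Ginv (clamp p.1) p.2) ⁻¹' s)
        = (fun u : ℝ => Ginv x u) ⁻¹' s := by
      ext u
      simp only [mem_preimage]
      rw [clamp_eq hx]
    rw [h1, h2, ← Measure.map_apply (measurable_f x) hs, step_eq hx.1 hx.2,
      Measure.add_apply, Measure.smul_apply, Measure.smul_apply, smul_eq_mul, smul_eq_mul,
      Measure.map_apply (measurable_Ginv_x hx.1 hx.2) hs]
  rw [lintegral_congr_ae hptwise, lintegral_add_left (by fun_prop),
    lintegral_const, measure_univ, mul_one,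
    lintegral_const_mul _ (measurable_measure_prodMk_left (measurable_Ginv hs)),
    ← Measure.prod_apply (measurable_Ginv hs)]
  rw [Measure.add_apply, Measure.smul_apply, Measure.smul_apply, smul_eq_mul, smul_eq_mul]
  unfold Tk
  rw [Measure.map_apply measurable_Ginv hs]

lemma mu_no_right (μ : Measure ℝ) [IsProbabilityMeasure μ]
    (hfix : (μ.prod unif).map (fun p : ℝ × ℝ => p.2 * p.1 + p.2 * (1 - p.2)) = μ) :
    μ (Ioi 1) = 0 := by
  have hmf : Measurable (fun p : ℝ × ℝ => p.2 * p.1 + p.2 * (1 - p.2)) := by fun_prop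
  set T : Set (ℝ × ℝ) := (fun p : ℝ × ℝ => p.2 * p.1 + p.2 * (1 - p.2)) ⁻¹' (Ioi 1) with hT
  have hTm : MeasurableSet T := hmf measurableSet_Ioi
  set g : ℝ → ℝ≥0∞ := fun x => unif (Prod.mk x ⁻¹' T) with hg
  have hgm : Measurable g := measurable_measure_prodMk_left hTm
  set h : ℝ → ℝ≥0∞ := fun x => if 1 < x then ENNReal.ofReal (1/(1+x)) else 0 with hh
  have hhm : Measurable h := by
    apply Measurable.ite measurableSet_Ioi (by fun_prop) measurable_const
  have hint : ∫⁻ x, g x ∂μ = μ (Ioi 1) := by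
    rw [← Measure.prod_apply hTm, hT, ← Measure.map_apply hmf measurableSet_Ioi, hfix]
  have hgzero : ∀ x : ℝ, x ≤ 1 → g x = 0 := by
    intro x hx
    rw [hg]
    have : Prod.mk x ⁻¹' T ∩ Icc 0 1 = ∅ := by
      ext u
      simp only [hT, mem_inter_iff, mem_preimage, mem_Ioi, mem_Icc, mem_empty_iff_false,
        iff_false]
      rintro ⟨hf, h0, h1⟩
      nlinarith [sq_nonneg (1 - u)]
    unfold unif
    show (volume.restrict (Icc (0:ℝ) 1)) (Prod.mk x ⁻¹' T) = 0
    rw [Measure.restrict_apply (measurable_prodMk_left hTm), this]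
    exact measure_empty
  have hbound : ∀ x : ℝ, g x + h x ≤ (Ioi (1:ℝ)).indicator (fun _ => 1) x := by
    intro x
    rcases le_or_gt x 1 with hx | hx
    · rw [hgzero x hx, hh]
      simp only [if_neg (not_lt.mpr hx), add_zero, indicator]
      split <;> simp
    · have ha0 : (0:ℝ) < 1/(1+x) := by positivity
      have ha1 : 1/(1+x) < 1 := by
        rw [div_lt_one (by linarith)]
        linarith
      have hsub : Prod.mk x ⁻¹' T ∩ Icc 0 1 ⊆ Ioc (1/(1+x)) 1 := by
        rintro u ⟨hf, h0, h1⟩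
        simp only [hT, mem_preimage, mem_Ioi] at hf
        constructor
        · by_contra hc
          push_neg at hc
          have : u * (1 + x) ≤ 1 := by
            calc u * (1 + x) ≤ (1/(1+x)) * (1 + x) := by
                  apply mul_le_mul_of_nonneg_right hc (by linarith)
              _ = 1 := by field_simp
          nlinarith
        · exact h1
      have hgle : g x ≤ ENNReal.ofReal (1 - 1/(1+x)) := by
        have hgx : g x = volume (Prod.mk x ⁻¹' T ∩ Icc 0 1) := by
          simp only [hg]
          unfold unif
          rw [Measure.restrict_apply (measurable_prodMk_left hTm)]
        rw [hgx]
        calc volume (Prod.mk x ⁻¹' T ∩ Icc 0 1) ≤ volume (Ioc (1/(1+x)) 1) :=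
              measure_mono hsub
          _ = ENNReal.ofReal (1 - 1/(1+x)) := by rw [Real.volume_Ioc]
      rw [hh]
      simp only [if_pos hx, indicator_of_mem (mem_Ioi.mpr hx)]
      calc g x + ENNReal.ofReal (1/(1+x))
          ≤ ENNReal.ofReal (1 - 1/(1+x)) + ENNReal.ofReal (1/(1+x)) := by
            exact add_le_add_left hgle _
        _ = 1 := by
            rw [← ENNReal.ofReal_add (by linarith) (by linarith)]
            norm_num
  have hsum : μ (Ioi 1) + ∫⁻ x, h x ∂μ ≤ μ (Ioi 1) := by
    calc μ (Ioi 1) + ∫⁻ x, h x ∂μ = ∫⁻ x, (g x + h x) ∂μ := by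
          rw [lintegral_add_left hgm, hint]
      _ ≤ ∫⁻ x, (Ioi (1:ℝ)).indicator (fun _ => 1) x ∂μ := lintegral_mono hbound
      _ = μ (Ioi 1) := by
          rw [lintegral_indicator measurableSet_Ioi]
          simp
  have hzero : ∫⁻ x, h x ∂μ = 0 := by
    have := ENNReal.le_of_add_le_add_left (measure_ne_top μ _) (by rwa [add_zero] : μ (Ioi 1) + ∫⁻ x, h x ∂μ ≤ μ (Ioi 1) + 0)
    exact le_antisymm this zero_le
  rw [lintegral_eq_zero_iff hhm] at hzero
  have hsubset : Ioi (1:ℝ) ⊆ {x | h x ≠ 0} := by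
    intro x hx
    simp only [mem_setOf_eq, hh, if_pos (mem_Ioi.mp hx)]
    have : (0:ℝ) < 1/(1+x) := by
      have := mem_Ioi.mp hx
      positivity
    have h1x : (0:ℝ) < 1 + x := by linarith [mem_Ioi.mp hx]
    simp [ENNReal.ofReal_eq_zero, not_le, this, h1x]
  apply measure_mono_null hsubset
  have hzero' : ∀ᵐ x ∂μ, h x = 0 := hzero
  exact ae_iff.mp hzero'

lemma mu_no_left (μ : Measure ℝ) [IsProbabilityMeasure μ]
    (hfix : (μ.prod unif).map (fun p : ℝ × ℝ => p.2 * p.1 + p.2 * (1 - p.2)) = μ) :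
    μ (Iio 0) = 0 := by
  have hmf : Measurable (fun p : ℝ × ℝ => p.2 * p.1 + p.2 * (1 - p.2)) := by fun_prop
  have key : ∀ t : ℝ, t < 0 → μ (Iio t) = 0 := by
    intro t ht
    set T : Set (ℝ × ℝ) := (fun p : ℝ × ℝ => p.2 * p.1 + p.2 * (1 - p.2)) ⁻¹' (Iio t) with hT
    have hTm : MeasurableSet T := hmf measurableSet_Iio
    set g : ℝ → ℝ≥0∞ := fun x => unif (Prod.mk x ⁻¹' T) with hg
    have hgm : Measurable g := measurable_measure_prodMk_left hTm
    set h : ℝ → ℝ≥0∞ := fun x => if x < t then ENNReal.ofReal (t/x) else 0 with hh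
    have hhm : Measurable h := by
      apply Measurable.ite measurableSet_Iio (by fun_prop) measurable_const
    have hint : ∫⁻ x, g x ∂μ = μ (Iio t) := by
      rw [← Measure.prod_apply hTm, hT, ← Measure.map_apply hmf measurableSet_Iio, hfix]
    have hgzero : ∀ x : ℝ, t ≤ x → g x = 0 := by
      intro x hx
      simp only [hg]
      unfold unif
      show (volume.restrict (Icc (0:ℝ) 1)) (Prod.mk x ⁻¹' T) = 0
      have hempty : Prod.mk x ⁻¹' T ∩ Icc 0 1 = ∅ := by
        ext u
        simp only [hT, mem_inter_iff, mem_preimage, mem_Iio, mem_Icc, mem_empty_iff_false,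
          iff_false]
        rintro ⟨hf, h0, h1⟩
        rcases le_or_gt x 0 with hx0 | hx0
        · nlinarith [mul_nonneg (sub_nonneg.mpr h1) (sub_nonneg.mpr (le_trans hx0 h0) : 0 ≤ u - x)]
        · nlinarith [mul_nonneg h0 (le_of_lt hx0), mul_nonneg h0 (sub_nonneg.mpr h1)]
      rw [Measure.restrict_apply (measurable_prodMk_left hTm), hempty]
      exact measure_empty
    have hbound : ∀ x : ℝ, g x + h x ≤ (Iio t).indicator (fun _ => 1) x := by
      intro x
      rcases le_or_gt t x with hx | hx
      · rw [hgzero x hx, hh]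
        simp only [if_neg (not_lt.mpr hx), add_zero, indicator]
        split <;> simp
      · have hxneg : x < 0 := lt_trans hx ht
        have ha0 : (0:ℝ) < t/x := by
          rw [show t/x = (-t)/(-x) by rw [neg_div_neg_eq]]
          exact div_pos (by linarith) (by linarith)
        have ha1 : t/x < 1 := by
          rw [show t/x = (-t)/(-x) by rw [neg_div_neg_eq], div_lt_one (by linarith)]
          linarith
        have hsub : Prod.mk x ⁻¹' T ∩ Icc 0 1 ⊆ Ioc (t/x) 1 := by
          rintro u ⟨hf, h0, h1⟩
          simp only [hT, mem_preimage, mem_Iio] at hf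
          refine ⟨?_, h1⟩
          by_contra hc
          push_neg at hc
          have hux : t ≤ u * x := by
            calc t = (t/x) * x := (div_mul_cancel₀ t (ne_of_lt hxneg)).symm
              _ ≤ u * x := mul_le_mul_of_nonpos_right hc (le_of_lt hxneg)
          nlinarith [mul_nonneg h0 (sub_nonneg.mpr h1)]
        have hgle : g x ≤ ENNReal.ofReal (1 - t/x) := by
          have hgx : g x = volume (Prod.mk x ⁻¹' T ∩ Icc 0 1) := by
            simp only [hg]
            unfold unif
            rw [Measure.restrict_apply (measurable_prodMk_left hTm)]
          rw [hgx]
          calc volume (Prod.mk x ⁻¹' T ∩ Icc 0 1) ≤ volume (Ioc (t/x) 1) :=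
                measure_mono hsub
            _ = ENNReal.ofReal (1 - t/x) := by rw [Real.volume_Ioc]
        rw [hh]
        simp only [if_pos hx, indicator_of_mem (mem_Iio.mpr hx)]
        calc g x + ENNReal.ofReal (t/x)
            ≤ ENNReal.ofReal (1 - t/x) + ENNReal.ofReal (t/x) := add_le_add_left hgle _
          _ = 1 := by
              rw [← ENNReal.ofReal_add (by linarith) (by linarith)]
              norm_num
    have hsum : μ (Iio t) + ∫⁻ x, h x ∂μ ≤ μ (Iio t) := by
      calc μ (Iio t) + ∫⁻ x, h x ∂μ = ∫⁻ x, (g x + h x) ∂μ := by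
            rw [lintegral_add_left hgm, hint]
        _ ≤ ∫⁻ x, (Iio t).indicator (fun _ => 1) x ∂μ := lintegral_mono hbound
        _ = μ (Iio t) := by
            rw [lintegral_indicator measurableSet_Iio]
            simp
    have hzero : ∫⁻ x, h x ∂μ = 0 := by
      have := ENNReal.le_of_add_le_add_left (measure_ne_top μ _)
        (by rwa [add_zero] : μ (Iio t) + ∫⁻ x, h x ∂μ ≤ μ (Iio t) + 0)
      exact le_antisymm this zero_le
    rw [lintegral_eq_zero_iff hhm] at hzero
    have hsubset : Iio t ⊆ {x | h x ≠ 0} := by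
      intro x hx
      have hx' := mem_Iio.mp hx
      have hxneg : x < 0 := lt_trans hx' ht
      have ha0 : (0:ℝ) < t/x := by
          rw [show t/x = (-t)/(-x) by rw [neg_div_neg_eq]]
          exact div_pos (by linarith) (by linarith)
      simp only [mem_setOf_eq, hh, if_pos hx']
      simp [ENNReal.ofReal_eq_zero, not_le, ha0]
    apply measure_mono_null hsubset
    have hzero' : ∀ᵐ x ∂μ, h x = 0 := hzero
    exact ae_iff.mp hzero'
  have hunion : Iio (0:ℝ) = ⋃ n : ℕ, Iio (-(1/((n:ℝ)+1))) := by
    ext x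
    simp only [mem_Iio, mem_iUnion]
    constructor
    · intro hx
      obtain ⟨n, hn⟩ := exists_nat_gt (1/(-x))
      refine ⟨n, ?_⟩
      have hxpos : (0:ℝ) < -x := by linarith
      have hn1 : (0:ℝ) < (n:ℝ) + 1 := by positivity
      rw [div_lt_iff₀ hxpos] at hn
      have : 1 / ((n:ℝ)+1) < -x := by
        rw [div_lt_iff₀ hn1]
        nlinarith
      linarith
    · rintro ⟨n, hn⟩
      have : (0:ℝ) < 1/((n:ℝ)+1) := by positivity
      linarith
  rw [hunion]
  apply measure_iUnion_null
  intro n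
  apply key
  have : (0:ℝ) < 1/((n:ℝ)+1) := by positivity
  linarith

lemma mu_supp (μ : Measure ℝ) [IsProbabilityMeasure μ]
    (hfix : (μ.prod unif).map (fun p : ℝ × ℝ => p.2 * p.1 + p.2 * (1 - p.2)) = μ) :
    μ (Icc 0 1) = 1 := by
  have hcompl : (Icc (0:ℝ) 1)ᶜ = Iio 0 ∪ Ioi 1 := by
    ext x
    simp only [mem_compl_iff, mem_Icc, mem_union, mem_Iio, mem_Ioi, not_and_or, not_le]
  have h0 : μ ((Icc (0:ℝ) 1)ᶜ) = 0 := by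
    rw [hcompl]
    exact measure_union_null (mu_no_left μ hfix) (mu_no_right μ hfix)
  have h1 : μ (Icc (0:ℝ) 1) = μ univ := by
    rw [← measure_add_measure_compl (μ := μ) measurableSet_Icc] at *
    rw [h0, add_zero]
  rw [h1, measure_univ]

lemma Tk_finite (ν : Measure ℝ) [IsFiniteMeasure ν] : IsFiniteMeasure (Tk ν) := by
  constructor
  unfold Tk
  rw [Measure.map_apply measurable_Ginv MeasurableSet.univ, preimage_univ,
    ← Set.univ_prod_univ, Measure.prod_prod]
  exact ENNReal.mul_lt_top (measure_lt_top ν univ) (measure_lt_top unif univ)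

lemma Tkn_lin (a b : ℝ≥0∞) (ha : a ≠ ⊤) (hb : b ≠ ⊤) :
    ∀ (n : ℕ) (ν ν' : Measure ℝ), IsFiniteMeasure ν → IsFiniteMeasure ν' →
      Tk^[n] (a • ν + b • ν') = a • Tk^[n] ν + b • Tk^[n] ν' := by
  intro n
  induction n with
  | zero => intro ν ν' _ _; simp
  | succ n ih =>
    intro ν ν' hν hν'
    haveI := hν; haveI := hν'
    rw [Function.iterate_succ_apply, Function.iterate_succ_apply,
      Function.iterate_succ_apply, Tk_lin]
    exact ih (Tk ν) (Tk ν') (Tk_finite ν) (Tk_finite ν')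

lemma fix_series (μ : Measure ℝ) [IsProbabilityMeasure μ]
    (hfix : (μ.prod unif).map (fun p : ℝ × ℝ => p.2 * p.1 + p.2 * (1 - p.2)) = μ)
    {s : Set ℝ} (hs : MeasurableSet s) :
    μ s = ∑' n : ℕ, (ENNReal.ofReal (1/8) * (ENNReal.ofReal (7/8))^n) * (Tk^[n] rho) s := by
  set q : ℝ≥0∞ := ENNReal.ofReal (7/8) with hq
  set c : ℝ≥0∞ := ENNReal.ofReal (1/8) with hc
  have hstep : μ = c • rho + q • Tk μ := by
    conv_lhs => rw [← hfix]
    exact Kdecomp μ (mu_supp μ hfix)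
  have hprobn : ∀ n : ℕ, IsProbabilityMeasure (Tk^[n] μ) := by
    intro n
    induction n with
    | zero => simpa using (inferInstance : IsProbabilityMeasure μ)
    | succ n ih =>
      rw [Function.iterate_succ_apply']
      exact @Tk_prob _ ih
  haveI hrhoprob : ∀ n : ℕ, IsProbabilityMeasure (Tk^[n] rho) := by
    intro n
    induction n with
    | zero => simpa using (inferInstance : IsProbabilityMeasure rho)
    | succ n ih =>
      rw [Function.iterate_succ_apply']
      exact @Tk_prob _ ih
  have key : ∀ n : ℕ, μ s = (∑ k ∈ Finset.range n, (c * q^k) * (Tk^[k] rho) s)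
      + q^n * (Tk^[n] μ) s := by
    intro n
    induction n with
    | zero => simp
    | succ n ih =>
      have hsub : (Tk^[n] μ) s = c * (Tk^[n] rho) s + q * (Tk^[n+1] μ) s := by
        have h1 : Tk^[n] μ = c • Tk^[n] rho + q • Tk^[n] (Tk μ) := by
          conv_lhs => rw [hstep]
          haveI hfin : IsFiniteMeasure (Tk μ) := Tk_finite μ
          exact Tkn_lin c q ENNReal.ofReal_ne_top ENNReal.ofReal_ne_top n rho (Tk μ)
            inferInstance hfin
        rw [h1, Measure.add_apply, Measure.smul_apply, Measure.smul_apply, smul_eq_mul,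
          smul_eq_mul, ← Function.iterate_succ_apply]
      calc μ s = (∑ k ∈ Finset.range n, (c * q^k) * (Tk^[k] rho) s)
            + q^n * (c * (Tk^[n] rho) s + q * (Tk^[n+1] μ) s) := by rw [ih, hsub]
        _ = (∑ k ∈ Finset.range (n+1), (c * q^k) * (Tk^[k] rho) s)
            + q^(n+1) * (Tk^[n+1] μ) s := by
          rw [Finset.sum_range_succ]
          ring
  have hq1 : q < 1 := by
    rw [hq]
    exact ENNReal.ofReal_lt_one.mpr (by norm_num)
  have hrem : Filter.Tendsto (fun n : ℕ => q^n * (Tk^[n] μ) s) Filter.atTop (nhds 0) := by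
    have hpow := ENNReal.tendsto_pow_atTop_nhds_zero_of_lt_one hq1
    apply tendsto_of_tendsto_of_tendsto_of_le_of_le tendsto_const_nhds hpow
    · intro n; exact zero_le
    · intro n
      haveI := hprobn n
      calc q^n * (Tk^[n] μ) s ≤ q^n * 1 := mul_le_mul_right prob_le_one _
        _ = q^n := mul_one _
  have hpart : Filter.Tendsto (fun n : ℕ => ∑ k ∈ Finset.range n, (c * q^k) * (Tk^[k] rho) s)
      Filter.atTop (nhds (∑' k : ℕ, (c * q^k) * (Tk^[k] rho) s)) :=
    ENNReal.tendsto_nat_tsum _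
  have hcomb := hpart.add hrem
  have heq : (fun n : ℕ => (∑ k ∈ Finset.range n, (c * q^k) * (Tk^[k] rho) s)
      + q^n * (Tk^[n] μ) s) = fun _ => μ s := funext fun n => (key n).symm
  rw [heq] at hcomb
  have := tendsto_nhds_unique hcomb tendsto_const_nhds
  rw [add_zero] at this
  exact this.symm

noncomputable def hfun : ℕ → (ℕ → ℝ) → ℝ
  | 0 => fun v => clamp (v 0) / 4
  | n+1 => fun v => Ginv (clamp (hfun n v)) (v (n+1))

lemma hfun_meas : ∀ n, Measurable (hfun n) := by
  intro n
  induction n with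
  | zero =>
    unfold hfun
    exact (measurable_clamp.comp (measurable_pi_apply 0)).div_const 4
  | succ n ih =>
    unfold hfun
    exact measurable_Ginv.comp (ih.prodMk (measurable_pi_apply (n+1)))

lemma hfun_mem : ∀ n v, hfun n v ∈ Icc (0:ℝ) 1 := by
  intro n v
  cases n with
  | zero =>
    unfold hfun
    have := clamp_mem (v 0)
    constructor
    · linarith [this.1]
    · linarith [this.2]
  | succ n => exact Ginv_mem _ _

lemma hfun_depends : ∀ n (v w : ℕ → ℝ), (∀ k, k ≤ n → v k = w k) → hfun n v = hfun n w := by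
  intro n
  induction n with
  | zero =>
    intro v w h
    unfold hfun
    rw [h 0 (le_refl 0)]
  | succ n ih =>
    intro v w h
    unfold hfun
    rw [ih v w (fun k hk => h k (le_trans hk (Nat.le_succ n))), h (n+1) (le_refl _)]

/-- Coupling from the past with the multigamma coupler: if `(U_k)` are i.i.d. uniform
on `[0,1]`, `N` is geometric with `P(N = n) = (1/8)(7/8)^n` independent of `(U_k)`,
`X_0 = U_0/4` and `X_k = G_{X_{k−1}}^{−1}(U_k)` for `k ≥ 1`, then `X_N` has law `μ`,
the unique solution of `Y =_d U·Y + U·(1−U)`. -/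
theorem cftp_output_law {Ω : Type*} [MeasurableSpace Ω] (P : Measure Ω)
    [IsProbabilityMeasure P]
    (U : ℕ → Ω → ℝ) (hUmeas : ∀ k, Measurable (U k))
    (hUunif : ∀ k, Measure.map (U k) P = volume.restrict (Set.Icc (0:ℝ) 1))
    (hUindep : iIndepFun U P)
    (N : Ω → ℕ) (hNmeas : Measurable N)
    (hNgeom : ∀ n : ℕ, P {ω | N ω = n} = ENNReal.ofReal ((1 / 8) * (7 / 8) ^ n))
    (hNindep : IndepFun N (fun ω k => U k ω) P)
    (X : ℕ → Ω → ℝ)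
    (hX0 : ∀ ω, X 0 ω = U 0 ω / 4)
    (hXsucc : ∀ k ω, X (k + 1) ω = Ginv (X k ω) (U (k + 1) ω))
    (μ : Measure ℝ) (hprob : IsProbabilityMeasure μ)
    (hfix : Measure.map (fun p : ℝ × ℝ => p.2 * p.1 + p.2 * (1 - p.2))
      (μ.prod (volume.restrict (Set.Icc (0:ℝ) 1))) = μ) :
    Measure.map (fun ω => X (N ω) ω) P = μ := by
  classical
  haveI := hprob
  have hfix' : (μ.prod unif).map (fun p : ℝ × ℝ => p.2 * p.1 + p.2 * (1 - p.2)) = μ := hfix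
  have hunif_eq : (volume.restrict (Set.Icc (0:ℝ) 1)) = unif := rfl
  set gfun : ℕ → Ω → ℝ := fun n ω => hfun n (fun k => U k ω) with hgfun
  have hUtuple_meas : Measurable (fun ω => (fun k => U k ω)) :=
    measurable_pi_lambda _ hUmeas
  have hgmeas : ∀ n, Measurable (gfun n) := fun n => (hfun_meas n).comp hUtuple_meas
  -- a.e. all U's in [0,1]
  have hUae : ∀ k, ∀ᵐ ω ∂P, U k ω ∈ Icc (0:ℝ) 1 := by
    intro k
    have h0 : P ((U k) ⁻¹' (Icc (0:ℝ) 1)ᶜ) = 0 := by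
      have h1 : P ((U k) ⁻¹' (Icc (0:ℝ) 1)ᶜ) = (P.map (U k)) ((Icc (0:ℝ) 1)ᶜ) :=
        (Measure.map_apply (hUmeas k) measurableSet_Icc.compl).symm
      rw [h1, hUunif k, Measure.restrict_apply measurableSet_Icc.compl,
        compl_inter_self, measure_empty]
    rw [ae_iff]
    exact h0
  have hE : ∀ᵐ ω ∂P, ∀ k, U k ω ∈ Icc (0:ℝ) 1 := ae_all_iff.mpr hUae
  have hXg : ∀ᵐ ω ∂P, ∀ n, X n ω = gfun n ω := by
    filter_upwards [hE] with ω hω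
    intro n
    induction n with
    | zero =>
      rw [hX0]
      show U 0 ω / 4 = hfun 0 (fun k => U k ω)
      unfold hfun
      rw [clamp_eq (hω 0)]
    | succ n ih =>
      rw [hXsucc, ih]
      show Ginv (gfun n ω) (U (n+1) ω) = hfun (n+1) (fun k => U k ω)
      unfold hfun
      rw [clamp_eq (hfun_mem n _)]
  -- law of gfun 0
  have hlaw0 : P.map (gfun 0) = rho := by
    have h1 : gfun 0 = (fun u : ℝ => clamp u / 4) ∘ (U 0) := rfl
    rw [h1, ← Measure.map_map (measurable_clamp.div_const 4) (hUmeas 0), hUunif 0, hunif_eq]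
    unfold rho
    apply Measure.map_congr
    filter_upwards [ae_restrict_mem measurableSet_Icc] with u hu
    rw [clamp_eq hu]
  -- independence of gfun n and U (n+1)
  have hindepn : ∀ n, IndepFun (gfun n) (U (n+1)) P := by
    intro n
    have hdisj : Disjoint (Finset.range (n+1)) ({n+1} : Finset ℕ) := by
      simp [Finset.disjoint_singleton_right]
    have base := hUindep.indepFun_finset (Finset.range (n+1)) {n+1} hdisj hUmeas
    set φ : ((i : (Finset.range (n+1) : Finset ℕ)) → ℝ) → ℝ :=
      fun w => hfun n (fun k => if h : k ∈ Finset.range (n+1) then w ⟨k, h⟩ else 0) with hφdef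
    set ψ : ((i : ({n+1} : Finset ℕ)) → ℝ) → ℝ :=
      fun w => w ⟨n+1, by simp⟩ with hψdef
    have hφ : Measurable φ := by
      apply (hfun_meas n).comp
      apply measurable_pi_lambda
      intro k
      by_cases h : k ∈ Finset.range (n+1)
      · simp only [dif_pos h]
        exact measurable_pi_apply _
      · simp only [dif_neg h]
        exact measurable_const
    have hψ : Measurable ψ := measurable_pi_apply _
    have hcomp := base.comp hφ hψ
    have heq1 : φ ∘ (fun ω (i : (Finset.range (n+1) : Finset ℕ)) => U i ω) = gfun n := by
      funext ω
      apply hfun_depends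
      intro k hk
      have hkmem : k ∈ Finset.range (n+1) := Finset.mem_range.mpr (Nat.lt_succ_of_le hk)
      simp only [Function.comp_apply, dif_pos hkmem]
    have heq2 : ψ ∘ (fun ω (i : ({n+1} : Finset ℕ)) => U i ω) = U (n+1) := rfl
    rw [heq1, heq2] at hcomp
    exact hcomp
  -- law recursion
  have hlawsucc : ∀ n, P.map (gfun (n+1)) = Tk (P.map (gfun n)) := by
    intro n
    have hpair : P.map (fun ω => (gfun n ω, U (n+1) ω)) = (P.map (gfun n)).prod unif := by
      rw [(indepFun_iff_map_prod_eq_prod_map_map (hgmeas n).aemeasurable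
        (hUmeas (n+1)).aemeasurable).mp (hindepn n), hUunif (n+1), hunif_eq]
    have h1 : gfun (n+1) = (fun p : ℝ × ℝ => Ginv (clamp p.1) p.2) ∘
        (fun ω => (gfun n ω, U (n+1) ω)) := rfl
    rw [h1, ← Measure.map_map measurable_Ginv ((hgmeas n).prodMk (hUmeas (n+1))), hpair]
    rfl
  have hlaw : ∀ n, P.map (gfun n) = Tk^[n] rho := by
    intro n
    induction n with
    | zero => exact hlaw0
    | succ n ih => rw [hlawsucc n, ih]; exact (Function.iterate_succ_apply' Tk n rho).symm
  -- the output variable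
  have hYmeas : Measurable (fun ω => gfun (N ω) ω) := by
    have h2 : Measurable (fun p : Ω × ℕ => gfun p.2 p.1) :=
      measurable_from_prod_countable_left (fun n => hgmeas n)
    exact h2.comp (measurable_id.prodMk hNmeas)
  have haeY : (fun ω => X (N ω) ω) =ᵐ[P] (fun ω => gfun (N ω) ω) := by
    filter_upwards [hXg] with ω hω
    exact hω (N ω)
  rw [Measure.map_congr haeY]
  apply Measure.ext
  intro s hs
  rw [Measure.map_apply hYmeas hs]
  have hdecomp : (fun ω => gfun (N ω) ω) ⁻¹' s = ⋃ n, (N ⁻¹' {n} ∩ gfun n ⁻¹' s) := by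
    ext ω
    simp only [mem_preimage, mem_iUnion, mem_inter_iff, mem_singleton_iff]
    constructor
    · intro h
      exact ⟨N ω, rfl, h⟩
    · rintro ⟨n, hn, hsn⟩
      rw [hn]
      exact hsn
  rw [hdecomp, measure_iUnion ?hd (fun n => ((hNmeas (measurableSet_singleton n)).inter
    ((hgmeas n) hs)))]
  case hd =>
    intro i j hij
    apply Set.disjoint_left.mpr
    rintro ω ⟨hi, _⟩ ⟨hj, _⟩
    exact hij (by rw [← hi, ← hj])
  have hterm : ∀ n, P (N ⁻¹' {n} ∩ gfun n ⁻¹' s) =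
      (ENNReal.ofReal (1/8) * (ENNReal.ofReal (7/8))^n) * (Tk^[n] rho) s := by
    intro n
    have hNg : IndepFun N (gfun n) P := by
      have := hNindep.comp measurable_id (hfun_meas n)
      exact this
    rw [indepFun_iff_measure_inter_preimage_eq_mul.mp hNg {n} s
      (measurableSet_singleton n) hs]
    have hNn : P (N ⁻¹' {n}) = ENNReal.ofReal ((1/8) * (7/8)^n) := hNgeom n
    rw [hNn, ← Measure.map_apply (hgmeas n) hs, hlaw n,
      ENNReal.ofReal_mul (by norm_num : (0:ℝ) ≤ 1/8),
      ENNReal.ofReal_pow (by norm_num : (0:ℝ) ≤ 7/8)]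
  rw [tsum_congr hterm]
  exact (fix_series μ hfix' hs).symm
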